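/- Let M ∈ ℝ^{n×n} be symmetric positive definite, C ∈ ℝ^{r×n}, and let λ, s ∈ ℝ^r satisfy: λ_i ≥ 0 and s_i ≤ 0 and λ_i s_i = 0 for every i; strict complementarity, i.e. there is no index i with λ_i = 0 and s_i = 0; and the rows {C_i : s_i = 0} of C indexed by the active constraints are linearly independent. Then the (n+r)×(n+r) block matrix [[M, Cᵀ], [diag(λ)·C, diag(s)]] is nonsingular. -/

import Mathlib

open Matrix

/-- If `M` is symmetric positive definite, the multipliers `λ` and
slacks `s` satisfy nonnegativity/nonpositivity, complementary slackness and strict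
complementarity, and the active rows of `C` are linearly independent, then the KKT
block matrix `[[M, Cᵀ], [diag(λ)·C, diag(s)]]` is nonsingular. -/
theorem stmt_5 {n r : ℕ}
    (M : Matrix (Fin n) (Fin n) ℝ) (C : Matrix (Fin r) (Fin n) ℝ)
    (lam s : Fin r → ℝ)
    (hM : M.PosDef) (hMsymm : M.IsSymm)
    (hlam : ∀ i, 0 ≤ lam i)
    (hs : ∀ i, s i ≤ 0)
    (hcomp : ∀ i, lam i * s i = 0)
    (hstrict : ¬ ∃ i, lam i = 0 ∧ s i = 0)
    (hrows : LinearIndependent ℝ (fun i : {i : Fin r // s i = 0} => C i.1)) :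
    IsUnit (Matrix.fromBlocks M Cᵀ (Matrix.diagonal lam * C) (Matrix.diagonal s)) := by
  rw [Matrix.isUnit_iff_isUnit_det, isUnit_iff_ne_zero]
  intro hdet
  obtain ⟨v, hv0, hv⟩ := Matrix.exists_mulVec_eq_zero_iff.2 hdet
  set x : Fin n → ℝ := v ∘ Sum.inl with hxdef
  set y : Fin r → ℝ := v ∘ Sum.inr with hydef
  rw [Matrix.fromBlocks_mulVec] at hv
  have h1 : M *ᵥ x + Cᵀ *ᵥ y = 0 := by
    funext j; exact congrFun hv (Sum.inl j)
  have h2 : ∀ i, lam i * (C *ᵥ x) i + s i * y i = 0 := by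
    intro i
    have := congrFun hv (Sum.inr i)
    simpa [← Matrix.mulVec_mulVec, Matrix.mulVec_diagonal, hxdef, hydef] using this
  -- dichotomy
  have hd : ∀ i, (s i = 0 ∧ 0 < lam i) ∨ (s i < 0 ∧ lam i = 0) := by
    intro i
    rcases mul_eq_zero.1 (hcomp i) with h | h
    · right
      refine ⟨lt_of_le_of_ne (hs i) ?_, h⟩
      intro hsi
      exact hstrict ⟨i, h, hsi⟩
    · left
      refine ⟨h, lt_of_le_of_ne (hlam i) ?_⟩
      intro hli
      exact hstrict ⟨i, hli.symm, h⟩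
  have hyinactive : ∀ i, s i ≠ 0 → y i = 0 := by
    intro i hi
    rcases hd i with ⟨h0, _⟩ | ⟨hlt, hl0⟩
    · exact absurd h0 hi
    · have := h2 i
      rw [hl0, zero_mul, zero_add] at this
      exact (mul_eq_zero.1 this).resolve_left (ne_of_lt hlt)
  have hCxactive : ∀ i, s i = 0 → (C *ᵥ x) i = 0 := by
    intro i hi
    rcases hd i with ⟨_, hpos⟩ | ⟨hlt, _⟩
    · have := h2 i
      rw [hi, zero_mul, add_zero] at this
      exact (mul_eq_zero.1 this).resolve_left (ne_of_gt hpos)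
    · exact absurd hi (ne_of_lt hlt)
  -- each term of (C x) ⬝ᵥ y vanishes
  have hterm : ∀ i, (C *ᵥ x) i * y i = 0 := by
    intro i
    by_cases hi : s i = 0
    · rw [hCxactive i hi, zero_mul]
    · rw [hyinactive i hi, mul_zero]
  have hMx : Cᵀ *ᵥ y = -(M *ᵥ x) := by
    rw [eq_neg_iff_add_eq_zero, add_comm]; exact h1
  have hxMx : dotProduct x (M *ᵥ x) = 0 := by
    have : dotProduct x (Cᵀ *ᵥ y) = dotProduct (C *ᵥ x) y := by
      rw [Matrix.dotProduct_mulVec, Matrix.vecMul_transpose]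
    rw [hMx, dotProduct_neg] at this
    have hsum : dotProduct (C *ᵥ x) y = 0 := by
      simp only [dotProduct]
      exact Finset.sum_eq_zero fun i _ => hterm i
    linarith
  have hx0 : x = 0 := by
    by_contra hx
    have := hM.dotProduct_mulVec_pos hx
    rw [star_trivial] at this
    exact absurd hxMx (ne_of_gt this)
  have hCty : Cᵀ *ᵥ y = 0 := by
    rw [hMx, hx0, Matrix.mulVec_zero, neg_zero]
  -- express as a linear combination of rows of C
  have hsum : ∑ i : Fin r, y i • C i = 0 := by
    funext j
    have := congrFun hCty j
    simpa [Matrix.mulVec, dotProduct, Matrix.transpose_apply, mul_comm,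
      Finset.sum_apply] using this
  have hsum2 : ∑ i : {i : Fin r // s i = 0}, y i.1 • C i.1 = 0 := by
    classical
    calc ∑ i : {i : Fin r // s i = 0}, y i.1 • C i.1
        = ∑ i ∈ Finset.univ.filter (fun i => s i = 0), y i • C i :=
          (Finset.sum_subtype (p := fun i => s i = 0)
            (Finset.univ.filter (fun i => s i = 0)) (fun i => by
            simp only [Finset.mem_filter, Finset.mem_univ, true_and])
            (fun i => y i • C i)).symm
      _ = ∑ i : Fin r, y i • C i := by
          apply Finset.sum_filter_of_ne
          intro i _ hne
          by_contra hsi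
          exact hne (by rw [hyinactive i hsi, zero_smul])
      _ = 0 := hsum
  have hyact : ∀ i : {i : Fin r // s i = 0}, y i.1 = 0 :=
    Fintype.linearIndependent_iff.1 hrows (fun i => y i.1) hsum2
  have hy0 : y = 0 := by
    funext i
    by_cases hi : s i = 0
    · exact hyact ⟨i, hi⟩
    · exact hyinactive i hi
  apply hv0
  funext i
  cases i with
  | inl j => exact congrFun hx0 j
  | inr j => exact congrFun hy0 j
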